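/- Let B be a nonempty open box in ℝⁿ (a product of n nonempty open intervals) and let X ⊆ B be a closed subset of B that is contained in a finite union of graphs of continuous functions of at most n−2 of the coordinates (equivalently, X has topological dimension < n−1 and is 'tame'). Concretely: if X ⊆ B is closed in B and for every coordinate projection π : ℝⁿ → ℝ^{n−1} the image π(X) has empty interior, and X is a finite union of sets each of which is the graph of a continuous map over a subset of some (n−2)-dimensional coordinate subspace, then B \ X is path-connected. -/

import Mathlib

/-- A set `S ⊆ ℝⁿ` is a coordinate graph over at most `k` coordinates if it is the
graph of a continuous map defined on a subset of a `k`-dimensional coordinate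
subspace (the remaining coordinates are continuous functions of coordinates in `s`). -/
def IsCoordGraph (n k : ℕ) (S : Set (Fin n → ℝ)) : Prop :=
  ∃ s : Finset (Fin n), s.card ≤ k ∧
    ∃ (D : Set ({ i // i ∈ s } → ℝ)) (g : ({ i // i ∈ s } → ℝ) → (Fin n → ℝ)),
      ContinuousOn g D ∧
      S = {x | (fun i : { i // i ∈ s } => x i.1) ∈ D ∧ x = g (fun i => x i.1)}

private lemma joinedIn_of_segment {E : Type*} [NormedAddCommGroup E] [NormedSpace ℝ E]
    {F : Set E} {x y : E} (h : segment ℝ x y ⊆ F) : JoinedIn F x y := by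
  have hpc : IsPathConnected (segment ℝ x y) :=
    (convex_segment x y).isPathConnected ⟨x, left_mem_segment ℝ x y⟩
  exact (hpc.joinedIn x (left_mem_segment ℝ x y) y (right_mem_segment ℝ x y)).mono h

/-- Removing from a nonempty open box `B ⊆ ℝ^{n+1}` a subset `X` that is closed in `B`,
all of whose coordinate projections to ℝⁿ have empty interior, and which is a finite
union of graphs of continuous maps over at most `(n+1)-2` coordinates, leaves a
path-connected set. -/
theorem stmt_1 (n : ℕ) (a b : Fin (n + 1) → ℝ) (hab : ∀ i, a i < b i)
    (B : Set (Fin (n + 1) → ℝ))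
    (hB : B = Set.pi Set.univ fun i => Set.Ioo (a i) (b i))
    (X : Set (Fin (n + 1) → ℝ)) (hXB : X ⊆ B)
    (hXclosed : IsClosed ((Subtype.val : B → (Fin (n + 1) → ℝ)) ⁻¹' X))
    (hproj : ∀ i : Fin (n + 1),
      interior ((fun x : Fin (n + 1) → ℝ => fun j : Fin n => x (i.succAbove j)) '' X) = ∅)
    (hgraphs : ∃ (m : ℕ) (S : Fin m → Set (Fin (n + 1) → ℝ)),
      (∀ k, IsCoordGraph (n + 1) (n + 1 - 2) (S k)) ∧ X = ⋃ k, S k) :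
    IsPathConnected (B \ X) := by
  classical
  -- the coordinate projections
  set proj : Fin (n + 1) → (Fin (n+1) → ℝ) → (Fin n → ℝ) :=
    fun i x => fun j => x (i.succAbove j) with hprojdef
  have cont_proj : ∀ i, Continuous (proj i) := fun i =>
    continuous_pi fun j => continuous_apply _
  -- recover a closed set t of the ambient space with X = t ∩ B
  obtain ⟨t, ht, htX⟩ := isClosed_induced_iff.mp hXclosed
  have hXt : X = t ∩ B := by
    ext x
    constructor
    · intro hx
      have hxB := hXB hx
      have : (⟨x, hxB⟩ : B) ∈ (Subtype.val : B → (Fin (n+1) → ℝ)) ⁻¹' X := hx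
      rw [← htX] at this
      exact ⟨this, hxB⟩
    · rintro ⟨hxt, hxB⟩
      have : (⟨x, hxB⟩ : B) ∈ (Subtype.val : B → (Fin (n+1) → ℝ)) ⁻¹' t := hxt
      rw [htX] at this
      exact this
  have hBopen : IsOpen B := by
    rw [hB]; exact isOpen_set_pi Set.finite_univ fun i _ => isOpen_Ioo
  have hdiff_eq : B \ X = B ∩ tᶜ := by
    rw [hXt]; ext x
    simp only [Set.mem_diff, Set.mem_inter_iff, Set.mem_compl_iff]
    tauto
  have hdiff_open : IsOpen (B \ X) := by
    rw [hdiff_eq]; exact hBopen.inter ht.isOpen_compl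
  -- a compact exhaustion of X
  set C : ℕ → Set (Fin (n+1) → ℝ) := fun m =>
    t ∩ Set.pi Set.univ (fun i => Set.Icc (a i + (b i - a i) / (m + 2)) (b i - (b i - a i) / (m + 2)))
    with hCdef
  have hCcomp : ∀ m, IsCompact (C m) :=
    fun m => (isCompact_univ_pi fun i => isCompact_Icc).inter_left ht
  have hd_pos : ∀ (m : ℕ) (i : Fin (n + 1)), 0 < (b i - a i) / (m + 2) := by
    intro m i
    apply div_pos (by linarith [hab i])
    positivity
  have hCX : ∀ m, C m ⊆ X := by
    intro m x hx
    rw [hXt]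
    refine ⟨hx.1, ?_⟩
    rw [hB]
    intro i _
    have h2 := hx.2 i (Set.mem_univ i)
    have := hd_pos m i
    exact ⟨by linarith [h2.1], by linarith [h2.2]⟩
  have hXC : X ⊆ ⋃ m, C m := by
    intro x hx
    rw [hXt] at hx
    have hxB := hx.2
    rw [hB] at hxB
    -- choose a uniform margin
    set δ : ℝ := Finset.univ.inf' ⟨0, Finset.mem_univ 0⟩
      (fun i : Fin (n + 1) => min (x i - a i) (b i - x i)) with hδdef
    have hδpos : 0 < δ := by
      rw [hδdef]; refine (Finset.lt_inf'_iff _).2 ?_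
      intro i _
      have := hxB i (Set.mem_univ i)
      simp only [lt_min_iff]
      exact ⟨by linarith [this.1], by linarith [this.2]⟩
    have hδle : ∀ i : Fin (n + 1), δ ≤ min (x i - a i) (b i - x i) := by
      intro i
      exact Finset.inf'_le _ (Finset.mem_univ i)
    obtain ⟨m, hm⟩ := exists_nat_ge (Finset.univ.sup' ⟨0, Finset.mem_univ 0⟩
      (fun i : Fin (n + 1) => (b i - a i) / δ))
    refine Set.mem_iUnion.mpr ⟨m, hx.1, ?_⟩
    intro i _
    have hsup : (b i - a i) / δ ≤ m :=
      le_trans (Finset.le_sup' (fun i => (b i - a i) / δ) (Finset.mem_univ i)) hm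
    have hbi : b i - a i ≤ δ * (m + 2) := by
      have h1 : b i - a i ≤ δ * m := by
        rw [div_le_iff₀ hδpos] at hsup
        linarith [hsup]
      nlinarith [hδpos]
    have hdle : (b i - a i) / (m + 2) ≤ δ := by
      rw [div_le_iff₀ (by positivity : (0:ℝ) < (m:ℝ) + 2)]
      linarith [hbi]
    have h1 := hδle i
    simp only [le_min_iff] at h1
    exact ⟨by linarith [h1.1], by linarith [h1.2]⟩
  -- the mixing map
  set mix : Fin (n + 1) → (Fin (n+1) → ℝ) × (Fin (n+1) → ℝ) → (Fin n → ℝ) :=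
    fun i u => fun j => if (i.succAbove j : ℕ) < (i : ℕ) then u.2 (i.succAbove j)
      else u.1 (i.succAbove j) with hmixdef
  have cont_mix : ∀ i, Continuous (mix i) := by
    intro i
    apply continuous_pi
    intro j
    by_cases h : (i.succAbove j : ℕ) < (i : ℕ)
    · simp only [hmixdef, if_pos h]
      exact (continuous_apply (i.succAbove j)).comp continuous_snd
    · simp only [hmixdef, if_neg h]
      exact (continuous_apply (i.succAbove j)).comp continuous_fst
  -- the good open dense sets
  set U : Fin (n + 1) → ℕ → Set ((Fin (n+1) → ℝ) × (Fin (n+1) → ℝ)) :=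
    fun i m => (mix i ⁻¹' (proj i '' C m))ᶜ with hUdef
  have hUopen : ∀ i m, IsOpen (U i m) := by
    intro i m
    exact (((hCcomp m).image (cont_proj i)).isClosed.preimage (cont_mix i)).isOpen_compl
  have hKint : ∀ i m, interior (proj i '' C m) = ∅ := by
    intro i m
    have : proj i '' C m ⊆ proj i '' X := Set.image_mono (hCX m)
    have h2 := interior_mono this
    rw [hproj i] at h2
    exact Set.eq_empty_iff_forall_notMem.mpr fun x hx => (h2 hx).elim
  have hUdense : ∀ i m, Dense (U i m) := by
    intro i m
    rw [Metric.dense_iff]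
    rintro ⟨z, w⟩ r hr
    have hKc : Dense (proj i '' C m)ᶜ := interior_eq_empty_iff_dense_compl.mp (hKint i m)
    obtain ⟨y, hy_ball, hy_nK⟩ := (Metric.dense_iff.mp hKc) (mix i (z, w)) r hr
    -- build a nearby pair mapping to y
    set z' : Fin (n+1) → ℝ := i.insertNth (z i)
      (fun j => if (i.succAbove j : ℕ) < (i : ℕ) then z (i.succAbove j) else y j) with hz'def
    set w' : Fin (n+1) → ℝ := i.insertNth (w i)
      (fun j => if (i.succAbove j : ℕ) < (i : ℕ) then y j else w (i.succAbove j)) with hw'def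
    have hmixy : mix i (z', w') = y := by
      funext j
      simp only [hmixdef]
      by_cases h : (i.succAbove j : ℕ) < (i : ℕ)
      · rw [if_pos h, hw'def, Fin.insertNth_apply_succAbove, if_pos h]
      · rw [if_neg h, hz'def, Fin.insertNth_apply_succAbove, if_neg h]
    have hyd : ∀ j, dist (y j) (mix i (z, w) j) < r := by
      intro j
      exact lt_of_le_of_lt (dist_le_pi_dist y (mix i (z, w)) j) (Metric.mem_ball.mp hy_ball)
    have hz'close : dist z' z < r := by
      rw [dist_pi_lt_iff hr]
      intro s
      by_cases hs : s = i
      · subst hs; rw [hz'def, Fin.insertNth_apply_same, dist_self]; exact hr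
      · obtain ⟨j, hj⟩ := Fin.exists_succAbove_eq hs
        subst hj
        rw [hz'def, Fin.insertNth_apply_succAbove]
        by_cases h : (i.succAbove j : ℕ) < (i : ℕ)
        · rw [if_pos h, dist_self]; exact hr
        · rw [if_neg h]
          have := hyd j
          simp only [hmixdef] at this
          rw [if_neg h] at this
          exact this
    have hw'close : dist w' w < r := by
      rw [dist_pi_lt_iff hr]
      intro s
      by_cases hs : s = i
      · subst hs; rw [hw'def, Fin.insertNth_apply_same, dist_self]; exact hr
      · obtain ⟨j, hj⟩ := Fin.exists_succAbove_eq hs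
        subst hj
        rw [hw'def, Fin.insertNth_apply_succAbove]
        by_cases h : (i.succAbove j : ℕ) < (i : ℕ)
        · rw [if_pos h]
          have := hyd j
          simp only [hmixdef] at this
          rw [if_pos h] at this
          exact this
        · rw [if_neg h, dist_self]; exact hr
    refine ⟨(z', w'), ?_, ?_⟩
    · rw [Metric.mem_ball, Prod.dist_eq]
      exact max_lt hz'close hw'close
    · rw [hUdef]
      simp only [Set.mem_compl_iff, Set.mem_preimage]
      rw [hmixy]
      exact hy_nK
  -- the comeager set of good pairs
  set Good : Set ((Fin (n+1) → ℝ) × (Fin (n+1) → ℝ)) := ⋂ i, ⋂ m, U i m with hGooddef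
  have hGood_res : Good ∈ residual ((Fin (n+1) → ℝ) × (Fin (n+1) → ℝ)) := by
    rw [hGooddef]
    rw [countable_iInter_mem]
    intro i
    rw [countable_iInter_mem]
    intro m
    exact residual_of_dense_open (hUopen i m) (hUdense i m)
  have hGood_dense : Dense Good := dense_of_mem_residual hGood_res
  have hGood_prop : ∀ u ∈ Good, ∀ i, mix i u ∉ proj i '' X := by
    intro u hu i hmem
    obtain ⟨x, hxX, hxeq⟩ := hmem
    obtain ⟨m, hm⟩ := Set.mem_iUnion.mp (hXC hxX)
    have : u ∈ U i m := Set.mem_iInter.mp (Set.mem_iInter.mp hu i) m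
    rw [hUdef] at this
    exact this ⟨x, hm, hxeq⟩
  -- membership in B is coordinatewise
  have hmemB : ∀ x : Fin (n+1) → ℝ, x ∈ B ↔ ∀ i, x i ∈ Set.Ioo (a i) (b i) := by
    intro x
    rw [hB, Set.mem_pi]
    exact ⟨fun h i => h i (Set.mem_univ i), fun h i _ => h i⟩
  -- staircase lemma
  have staircase : ∀ z w : Fin (n+1) → ℝ, z ∈ B \ X → w ∈ B \ X →
      (∀ i, mix i (z, w) ∉ proj i '' X) → JoinedIn (B \ X) z w := by
    intro z w hz hw hgood
    set v : ℕ → (Fin (n+1) → ℝ) := fun k r => if (r : ℕ) < k then w r else z r with hvdef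
    have hv0 : v 0 = z := by funext r; simp [hvdef]
    have hvlast : v (n + 1) = w := by
      funext r; simp [hvdef, r.isLt]
    have hstep : ∀ k : ℕ, k ≤ n → JoinedIn (B \ X) (v k) (v (k + 1)) := by
      intro k hk
      set i : Fin (n + 1) := ⟨k, by omega⟩ with hidef
      apply joinedIn_of_segment
      intro x hx
      obtain ⟨c₁, c₂, hc₁, hc₂, hcsum, hcx⟩ := hx
      have hxr : ∀ r : Fin (n + 1), (r : ℕ) ≠ k → x r = v k r := by
        intro r hr
        have hvv : v (k + 1) r = v k r := by
          simp only [hvdef]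
          by_cases h : (r : ℕ) < k
          · rw [if_pos h, if_pos (by omega)]
          · rw [if_neg h, if_neg (by omega)]
        rw [← hcx]
        simp only [Pi.add_apply, Pi.smul_apply, smul_eq_mul, hvv]
        rw [← add_mul, hcsum, one_mul]
      have hxi : x i = c₁ * z i + c₂ * w i := by
        rw [← hcx]
        simp only [Pi.add_apply, Pi.smul_apply, smul_eq_mul, hvdef]
        have h1 : ¬ ((i : ℕ) < k) := by simp [hidef]
        have h2 : (i : ℕ) < k + 1 := by simp [hidef]
        rw [if_neg h1, if_pos h2]
      have hvmem : ∀ k' : ℕ, ∀ r : Fin (n+1), v k' r ∈ Set.Ioo (a r) (b r) := by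
        intro k' r
        simp only [hvdef]
        by_cases h : (r : ℕ) < k'
        · rw [if_pos h]; exact (hmemB w).mp hw.1 r
        · rw [if_neg h]; exact (hmemB z).mp hz.1 r
      have hxB : x ∈ B := by
        rw [hmemB]
        intro r
        by_cases hr : (r : ℕ) = k
        · have : r = i := Fin.ext hr
          rw [this, hxi]
          have hzi := (hmemB z).mp hz.1 i
          have hwi := (hmemB w).mp hw.1 i
          simpa [smul_eq_mul] using (convex_Ioo (a i) (b i)) hzi hwi hc₁ hc₂ hcsum
        · rw [hxr r hr]; exact hvmem k r
      refine ⟨hxB, ?_⟩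
      intro hxX
      apply hgood i
      refine ⟨x, hxX, ?_⟩
      funext j
      have hne : i.succAbove j ≠ i := Fin.succAbove_ne i j
      have hne' : ((i.succAbove j : Fin (n+1)) : ℕ) ≠ k := by
        intro hcontra
        exact hne (Fin.ext (by simp [hidef] at hcontra ⊢; omega))
      rw [hprojdef]
      simp only
      rw [hxr (i.succAbove j) hne']
    have hchain : ∀ k : ℕ, k ≤ n + 1 → JoinedIn (B \ X) z (v k) := by
      intro k
      induction k with
      | zero => intro _; rw [hv0]; exact JoinedIn.refl hz
      | succ k ih =>
        intro hk
        exact (ih (by omega)).trans (hstep k (by omega))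
    have := hchain (n + 1) le_rfl
    rwa [hvlast] at this
  -- nonemptiness
  rw [isPathConnected_iff]
  constructor
  · -- B \ X is nonempty
    have hBne : B.Nonempty := by
      refine ⟨fun i => (a i + b i) / 2, ?_⟩
      rw [hmemB]
      intro i
      simp only [Set.mem_Ioo]
      constructor <;> linarith [hab i]
    obtain ⟨u, hu_good, hu_mem⟩ :=
      hGood_dense.exists_mem_open (hBopen.prod hBopen) (hBne.prod hBne)
    refine ⟨u.1, hu_mem.1, ?_⟩
    intro hX
    apply hGood_prop u hu_good 0
    refine ⟨u.1, hX, ?_⟩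
    funext j
    rw [hprojdef, hmixdef]
    simp only
    rw [if_neg (by simp : ¬ (((0 : Fin (n+1)).succAbove j : ℕ) < ((0 : Fin (n+1)) : ℕ)))]
  · -- any two points are joined
    intro p hp q hq
    obtain ⟨εp, hεp, hεpsub⟩ := Metric.isOpen_iff.mp hdiff_open p hp
    obtain ⟨εq, hεq, hεqsub⟩ := Metric.isOpen_iff.mp hdiff_open q hq
    set r : ℝ := min εp εq with hrdef
    have hrpos : 0 < r := lt_min hεp hεq
    obtain ⟨u, hu_ball, hu_good⟩ :=
      (Metric.dense_iff.mp hGood_dense) (p, q) r hrpos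
    obtain ⟨z, w⟩ := u
    have hdist : max (dist z p) (dist w q) < r := by
      have := Metric.mem_ball.mp hu_ball
      rwa [Prod.dist_eq] at this
    have hzball : z ∈ Metric.ball p εp :=
      Metric.mem_ball.mpr (lt_of_lt_of_le (lt_of_le_of_lt (le_max_left _ _) hdist) (min_le_left _ _))
    have hwball : w ∈ Metric.ball q εq :=
      Metric.mem_ball.mpr (lt_of_lt_of_le (lt_of_le_of_lt (le_max_right _ _) hdist) (min_le_right _ _))
    have hz : z ∈ B \ X := hεpsub hzball
    have hw : w ∈ B \ X := hεqsub hwball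
    have j1 : JoinedIn (B \ X) p z := by
      apply joinedIn_of_segment
      intro x hx
      exact hεpsub ((convex_ball p εp).segment_subset (Metric.mem_ball_self hεp) hzball hx)
    have j3 : JoinedIn (B \ X) w q := by
      apply joinedIn_of_segment
      intro x hx
      exact hεqsub ((convex_ball q εq).segment_subset hwball (Metric.mem_ball_self hεq)
        ((segment_symm ℝ w q) ▸ hx))
    exact (j1.trans (staircase z w hz hw (hGood_prop (z, w) hu_good))).trans j3
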